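/- A countable family K = (A_i)_{i∈I} of pairwise nonisomorphic structures is Fin-learnable if and only if for every i ∈ I there exists s ∈ ℕ such that for every j ∈ I with j ≠ i, the finite restriction A_i↾s does not embed into A_j. (This is the paper's characterization of Fin-learnability by Σ^inf_1-strong antichains, stated in its equivalent combinatorial form for relational structures, where a Σ^inf_1 sentence separating structures can be taken to assert the existence of an embedded copy of a finite restriction.) -/

import Mathlib

/-- A structure on domain ℕ: a binary relation given as a map to `Bool`. -/
abbrev Struc := ℕ → ℕ → Bool

/-- The restrictions of `R` and `R'` to `{0,…,s} × {0,…,s}` agree. -/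
def restrEq (R R' : Struc) (s : ℕ) : Prop :=
  ∀ x ≤ s, ∀ y ≤ s, R x y = R' x y

/-- `R` and `R'` are isomorphic structures. -/
def Isom (R R' : Struc) : Prop :=
  ∃ e : ℕ ≃ ℕ, ∀ x y, R' (e x) (e y) = R x y

/-- `R↾s` embeds into `R'`: there is a map injective on `{0,…,s}` preserving the relation. -/
def EmbedsRestr (R : Struc) (s : ℕ) (R' : Struc) : Prop :=
  ∃ h : ℕ → ℕ, (∀ x ≤ s, ∀ y ≤ s, h x = h y → x = y) ∧
    (∀ x ≤ s, ∀ y ≤ s, R' (h x) (h y) = R x y)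

/-- The learning domain of a family: all isomorphic copies of members of the family. -/
def LD {I : Type} (A : I → Struc) : Set Struc := {R | ∃ i, Isom R (A i)}

/-- A learner: its conjecture at stage `s` depends only on `R↾s`. -/
def IsLearner {I : Type} (M : Struc → ℕ → Option I) : Prop :=
  ∀ R R' s, restrEq R R' s → M R s = M R' s

/-- `M` Ex-learns the family `A`. -/
def ExLearns {I : Type} (A : I → Struc) (M : Struc → ℕ → Option I) : Prop :=
  ∀ R i, Isom R (A i) → ∃ s₀, ∀ s ≥ s₀, M R s = some i

/-- `M` Fin-learns the family `A`. -/
def FinLearns {I : Type} (A : I → Struc) (M : Struc → ℕ → Option I) : Prop :=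
  ∀ R i, Isom R (A i) →
    ∃ s₀, (∀ s < s₀, M R s = none) ∧ (∀ s ≥ s₀, M R s = some i)

/-- `M` co-learns the family `A`. -/
def CoLearns {I : Type} (A : I → Struc) (M : Struc → ℕ → Option I) : Prop :=
  ∀ R i, Isom R (A i) → ∀ j, (∃ s, M R s = some j) ↔ j ≠ i

/-- `M` nUs-learns the family `A`: it Ex-learns it and never abandons the correct conjecture. -/
def NUsLearns {I : Type} (A : I → Struc) (M : Struc → ℕ → Option I) : Prop :=
  ExLearns A M ∧
    ∀ R i, Isom R (A i) → ∀ s, M R s = some i → ∀ t ≥ s, M R t = some i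

/-- `M` Dec-learns the family `A`: it Ex-learns it and never repeats an abandoned conjecture. -/
def DecLearns {I : Type} (A : I → Struc) (M : Struc → ℕ → Option I) : Prop :=
  ExLearns A M ∧
    ∀ R ∈ LD A, ∀ (j : I) (s : ℕ), M R s = some j → M R (s + 1) ≠ some j →
      ∀ t > s, M R t ≠ some j

/-- `M` PL-learns the family `A`: the unique conjecture output infinitely often is correct. -/
def PLLearns {I : Type} (A : I → Struc) (M : Struc → ℕ → Option I) : Prop :=
  ∀ R ∈ LD A, ∀ i, {s | M R s = some i}.Infinite ↔ Isom R (A i)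

/-- The relation `E₀` on Baire space: eventual agreement. -/
def E0 (p q : ℕ → ℕ) : Prop := ∃ m, ∀ n ≥ m, p n = q n

/-- The relation `E₃` on `ℕ → (ℕ → ℕ)`: columnwise `E₀`. -/
def E3 (p q : ℕ → ℕ → ℕ) : Prop := ∀ m, E0 (p m) (q m)

/-- The relation `E_range` on Baire space: equality of ranges. -/
def Erange (p q : ℕ → ℕ) : Prop := Set.range p = Set.range q

/-- A countable family of pairwise nonisomorphic structures is Fin-learnable iff for every
`i` there is an `s` such that `(A i)↾s` embeds into no other member of the family. -/
lemma exists_perm_extend (s : ℕ) (h : ℕ → ℕ)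
    (hinj : ∀ x ≤ s, ∀ y ≤ s, h x = h y → x = y) :
    ∃ e : ℕ ≃ ℕ, ∀ x ≤ s, e x = h x := by
  classical
  set S : Set ℕ := {x | x ≤ s} with hS
  set T : Set ℕ := h '' S with hT
  have hSfin : S.Finite := Set.finite_Iic s
  have hTfin : T.Finite := hSfin.image h
  have hScompl : Sᶜ.Infinite := hSfin.infinite_compl
  have hTcompl : Tᶜ.Infinite := hTfin.infinite_compl
  obtain ⟨e1, he1⟩ : ∃ e1 : S ≃ T, ∀ x : S, (e1 x : ℕ) = h x := by
    refine ⟨Equiv.ofBijective (fun x => ⟨h x, ⟨x, x.2, rfl⟩⟩) ⟨?_, ?_⟩, fun x => rfl⟩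
    · rintro ⟨x, hx⟩ ⟨y, hy⟩ hxy
      exact Subtype.ext (hinj x hx y hy (congrArg Subtype.val hxy))
    · rintro ⟨t, ⟨x, hx, rfl⟩⟩
      exact ⟨⟨x, hx⟩, rfl⟩
  have i1 : Infinite ↥Sᶜ := hScompl.to_subtype
  have i2 : Infinite ↥Tᶜ := hTcompl.to_subtype
  obtain ⟨d1⟩ := nonempty_denumerable ↥Sᶜ
  obtain ⟨d2⟩ := nonempty_denumerable ↥Tᶜ
  have e2 : ↥Sᶜ ≃ ↥Tᶜ := (d1.eqv _).trans (d2.eqv _).symm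
  refine ⟨((Equiv.sumCompl (· ∈ S)).symm.trans ((e1.sumCongr e2).trans
    (Equiv.sumCompl (· ∈ T)))), fun x hx => ?_⟩
  have : (Equiv.sumCompl (· ∈ S)).symm x = Sum.inl ⟨x, hx⟩ :=
    Equiv.sumCompl_symm_apply_of_pos (p := (· ∈ S)) hx
  rw [Equiv.trans_apply, Equiv.trans_apply, this]
  show (Equiv.sumCompl (· ∈ T)) (Sum.inl (e1 ⟨x, hx⟩)) = h x
  rw [Equiv.sumCompl_apply_inl]
  exact he1 ⟨x, hx⟩

/-- The finitary matching predicate used by the learner. -/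
def Matches {I : Type} (A : I → Struc) (σ : I → ℕ) (i : I) (t : ℕ) (R : Struc) : Prop :=
  ∃ h : ℕ → ℕ, (∀ x ≤ σ i, h x ≤ t) ∧
    (∀ x ≤ σ i, ∀ y ≤ σ i, h x = h y → x = y) ∧
    (∀ x ≤ σ i, ∀ y ≤ σ i, R (h x) (h y) = A i x y)

theorem finLearnable_iff_strong_antichain {I : Type} [Countable I] (A : I → Struc)
    (hA : ∀ i j, i ≠ j → ¬ Isom (A i) (A j)) :
    (∃ M : Struc → ℕ → Option I, IsLearner M ∧ FinLearns A M) ↔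
      ∀ i, ∃ s, ∀ j, j ≠ i → ¬ EmbedsRestr (A i) s (A j) := by
  classical
  constructor
  · rintro ⟨M, hL, hF⟩ i
    by_contra hcon
    push_neg at hcon
    obtain ⟨s₀, hnone, hsome⟩ := hF (A i) i ⟨Equiv.refl ℕ, fun _ _ => rfl⟩
    obtain ⟨j, hji, h, hinj, hpres⟩ := hcon s₀
    obtain ⟨e, he⟩ := exists_perm_extend s₀ h hinj
    set R' : Struc := fun x y => A j (e x) (e y) with hR'
    have hIso : Isom R' (A j) := ⟨e, fun _ _ => rfl⟩
    have hre : restrEq (A i) R' s₀ := by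
      intro x hx y hy
      rw [hR']
      simp only [he x hx, he y hy]
      exact (hpres x hx y hy).symm
    obtain ⟨t₀, hnone', hsome'⟩ := hF R' j hIso
    have hM : M R' s₀ = some i := by
      rw [← hL (A i) R' s₀ hre]
      exact hsome s₀ le_rfl
    rcases lt_or_ge s₀ t₀ with hlt | hge
    · rw [hnone' s₀ hlt] at hM; exact (Option.some_ne_none i hM.symm).elim
    · rw [hsome' s₀ hge] at hM
      exact hji (Option.some.inj hM)
  · intro hs
    choose σ hσ using hs
    set P : I → ℕ → Struc → Prop := fun i t R => Matches A σ i t R with hP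
    refine ⟨fun R t => if hx : ∃ i, P i t R then some hx.choose else none, ?_, ?_⟩
    · intro R R' t hre
      have hpred : (fun i => P i t R) = (fun i => P i t R') := by
        funext i
        apply propext
        constructor <;> rintro ⟨h, hb, hi, hp⟩ <;>
          refine ⟨h, hb, hi, fun x hx y hy => ?_⟩
        · rw [← hre (h x) (hb x hx) (h y) (hb y hy)]; exact hp x hx y hy
        · rw [hre (h x) (hb x hx) (h y) (hb y hy)]; exact hp x hx y hy
      simp only [hpred]
    · intro R i hiso
      obtain ⟨e, he⟩ := hiso
      -- uniqueness
      have huniq : ∀ j t, P j t R → j = i := by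
        intro j t ⟨h, hb, hi, hp⟩
        by_contra hne
        refine hσ j i (Ne.symm hne) ⟨fun x => e (h x), fun x hx y hy hxy => hi x hx y hy (e.injective hxy),
          fun x hx y hy => ?_⟩
        rw [he (h x) (h y)]
        exact hp x hx y hy
      -- existence
      have hex : ∃ t, P i t R := by
        refine ⟨(Finset.range (σ i + 1)).sup (fun x => e.symm x),
          fun x => e.symm x, fun x hx => ?_, fun x _ y _ hxy => e.symm.injective hxy,
          fun x _ y _ => ?_⟩
        · exact Finset.le_sup (f := fun x => e.symm x)
            (Finset.mem_range.2 (Nat.lt_succ_of_le hx))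
        · rw [← he (e.symm x) (e.symm y), e.apply_symm_apply, e.apply_symm_apply]
      have hmono : ∀ t t', t ≤ t' → P i t R → P i t' R := by
        rintro t t' htt ⟨h, hb, hi, hp⟩
        exact ⟨h, fun x hx => le_trans (hb x hx) htt, hi, hp⟩
      refine ⟨Nat.find hex, fun t ht => ?_, fun t ht => ?_⟩
      · show (if hx : ∃ j, P j t R then some hx.choose else none) = none
        rw [dif_neg]
        rintro ⟨j, hj⟩
        exact Nat.find_min hex ht (huniq j t hj ▸ hj)
      · have hPt : P i t R := hmono _ _ ht (Nat.find_spec hex)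
        have hx : ∃ j, P j t R := ⟨i, hPt⟩
        show (if hx : ∃ j, P j t R then some hx.choose else none) = some i
        rw [dif_pos hx]
        exact congrArg some (huniq _ _ hx.choose_spec)
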